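/- arXiv:2004.12572 — 2 statements merged into one kernel-verified Lean document; each statement's English description precedes it below -/
import Mathlib

section
/- For every m > 0 there exists a constant C_m > 0 such that for all y ≥ 0 and all ε with 0 < ε < 1, one has y^m e^{-y} ≤ C_m ( ε + (log(1/ε))^m e^{-y} ). -/
open Real

lemma aux_bound (m : ℝ) (hm : 0 < m) :
    ∃ B : ℝ, 0 < B ∧ ∀ y : ℝ, 0 ≤ y → y ^ m * Real.exp (-(y/2)) ≤ B := by
  set n : ℕ := ⌈m⌉₊ with hn
  refine ⟨((Nat.factorial n : ℕ) : ℝ) * 2 ^ n, by positivity, fun y hy => ?_⟩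
  have h1 : (1:ℝ) ≤ ((Nat.factorial n : ℕ) : ℝ) * 2 ^ n := by
    have : (1:ℝ) ≤ ((Nat.factorial n : ℕ) : ℝ) := by exact_mod_cast Nat.one_le_iff_ne_zero.mpr (Nat.factorial_ne_zero n)
    have h2 : (1:ℝ) ≤ 2 ^ n := one_le_pow₀ one_le_two
    nlinarith
  rcases le_or_gt y 1 with hy1 | hy1
  · have : y ^ m ≤ 1 := Real.rpow_le_one hy hy1 hm.le
    have he : Real.exp (-(y/2)) ≤ 1 := Real.exp_le_one_iff.mpr (by nlinarith)
    nlinarith [Real.rpow_nonneg hy m, Real.exp_pos (-(y/2))]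
  · have hym : y ^ m ≤ y ^ (n:ℝ) := by
      apply Real.rpow_le_rpow_of_exponent_le hy1.le (Nat.le_ceil m)
    have hpow : y ^ (n:ℝ) = y ^ n := Real.rpow_natCast y n
    have hfac : (y/2) ^ n / ((Nat.factorial n : ℕ) : ℝ) ≤ Real.exp (y/2) :=
      Real.pow_div_factorial_le_exp (y/2) (by positivity) n
    have hyn : y ^ n ≤ ((Nat.factorial n : ℕ) : ℝ) * 2 ^ n * Real.exp (y/2) := by
      have h2 : (y/2) ^ n = y ^ n / 2 ^ n := div_pow y 2 n
      rw [h2] at hfac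
      have hf : (0:ℝ) < ((Nat.factorial n : ℕ) : ℝ) := by exact_mod_cast Nat.factorial_pos n
      have h2p : (0:ℝ) < 2 ^ n := by positivity
      calc y ^ n = (y ^ n / 2 ^ n / ((Nat.factorial n : ℕ) : ℝ)) * (((Nat.factorial n : ℕ) : ℝ) * 2 ^ n) := by field_simp
        _ ≤ Real.exp (y/2) * (((Nat.factorial n : ℕ) : ℝ) * 2 ^ n) := by
            apply mul_le_mul_of_nonneg_right hfac; positivity
        _ = ((Nat.factorial n : ℕ) : ℝ) * 2 ^ n * Real.exp (y/2) := by ring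
    have hexp : Real.exp (-(y/2)) * Real.exp (y/2) = 1 := by
      rw [← Real.exp_add]; simp
    have he : 0 < Real.exp (-(y/2)) := Real.exp_pos _
    calc y ^ m * Real.exp (-(y/2)) ≤ y ^ n * Real.exp (-(y/2)) := by
          apply mul_le_mul_of_nonneg_right _ he.le; rw [← hpow]; exact hym
      _ ≤ (((Nat.factorial n : ℕ) : ℝ) * 2 ^ n * Real.exp (y/2)) * Real.exp (-(y/2)) := by
          apply mul_le_mul_of_nonneg_right hyn he.le
      _ = ((Nat.factorial n : ℕ) : ℝ) * 2 ^ n := by rw [mul_assoc, mul_comm (Real.exp (y/2)), hexp, mul_one]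

theorem stmt0 (m : ℝ) (hm : 0 < m) :
    ∃ C : ℝ, 0 < C ∧ ∀ y : ℝ, 0 ≤ y → ∀ ε : ℝ, 0 < ε → ε < 1 →
      y ^ m * Real.exp (-y) ≤ C * (ε + (Real.log (1 / ε)) ^ m * Real.exp (-y)) := by
  obtain ⟨B, hB, hBle⟩ := aux_bound m hm
  refine ⟨(2:ℝ) ^ m + B, by positivity, fun y hy ε hε hε1 => ?_⟩
  set L := Real.log (1 / ε) with hL
  have hLpos : 0 < L := Real.log_pos (by rw [one_div]; exact (one_lt_inv_iff₀).mpr ⟨hε, hε1⟩)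
  have hLm : 0 < L ^ m := Real.rpow_pos_of_pos hLpos m
  have hey : 0 < Real.exp (-y) := Real.exp_pos _
  have h2m : (0:ℝ) < (2:ℝ) ^ m := Real.rpow_pos_of_pos two_pos m
  rcases le_or_gt y (2 * L) with hcase | hcase
  · -- y ≤ 2L : y^m ≤ (2L)^m = 2^m L^m
    have hym : y ^ m ≤ (2 * L) ^ m := Real.rpow_le_rpow hy hcase hm.le
    have h2L : (2 * L) ^ m = 2 ^ m * L ^ m := Real.mul_rpow (by norm_num) hLpos.le
    calc y ^ m * Real.exp (-y) ≤ 2 ^ m * L ^ m * Real.exp (-y) := by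
          rw [← h2L]; exact mul_le_mul_of_nonneg_right hym hey.le
      _ ≤ ((2:ℝ) ^ m + B) * (ε + L ^ m * Real.exp (-y)) := by
          nlinarith [mul_pos h2m hε, mul_pos hB hε, mul_pos hB (mul_pos hLm hey)]
  · -- y > 2L : e^{-y} ≤ ε e^{-y/2}
    have hεe : Real.exp (-L) = ε := by
      rw [hL, one_div, Real.log_inv, neg_neg, Real.exp_log hε]
    have hkey : Real.exp (-y) ≤ ε * Real.exp (-(y/2)) := by
      rw [← hεe, ← Real.exp_add]
      apply Real.exp_le_exp.mpr; linarith
    have hym : 0 ≤ y ^ m := Real.rpow_nonneg hy m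
    calc y ^ m * Real.exp (-y) ≤ y ^ m * (ε * Real.exp (-(y/2))) :=
          mul_le_mul_of_nonneg_left hkey hym
      _ = (y ^ m * Real.exp (-(y/2))) * ε := by ring
      _ ≤ B * ε := mul_le_mul_of_nonneg_right (hBle y hy) hε.le
      _ ≤ ((2:ℝ) ^ m + B) * (ε + L ^ m * Real.exp (-y)) := by
          nlinarith [mul_pos h2m hε, mul_pos hB (mul_pos hLm hey), mul_pos h2m (mul_pos hLm hey)]
end

section
/- Let n ≥ 1, K > 0, γ > 0, b > 0, and define G : ℝⁿ × (0, ∞) → ℝ by G(x,t) = exp( 2γ(t^{-K} − 1) − (b⟨x⟩² + K)/t ), where ⟨x⟩ = √(1 + |x|²). Then for all t > 0, (∂_t G − Δ_x G)/G = (b⟨x⟩² − 4b²|x|² + K)/t² + 2bn/t − 2γK/t^{K+1}. -/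
open Real

theorem stmt5 (n : ℕ) (hn : 1 ≤ n) (K γ b : ℝ) (hK : 0 < K) (hγ : 0 < γ) (hb : 0 < b)
    (G : (Fin n → ℝ) → ℝ → ℝ)
    (hG : ∀ x t, G x t =
      Real.exp (2 * γ * (t ^ (-K) - 1) - (b * (1 + ∑ i, (x i) ^ 2) + K) / t)) :
    ∀ x : Fin n → ℝ, ∀ t : ℝ, 0 < t →
      (deriv (fun s => G x s) t -
          ∑ i : Fin n,
            fderiv ℝ (fun y => fderiv ℝ (fun z => G z t) y (Pi.single i 1)) x
              (Pi.single i 1)) / G x t =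
        (b * (1 + ∑ i, (x i) ^ 2) - 4 * b ^ 2 * (∑ i, (x i) ^ 2) + K) / t ^ 2
          + 2 * b * n / t - 2 * γ * K / t ^ (K + 1) := by
  intro x t ht
  have ht' : t ≠ 0 := ne_of_gt ht
  have hGpos : ∀ y : Fin n → ℝ, 0 < G y t := fun y => by rw [hG]; exact Real.exp_pos _
  set A : ℝ := 2 * γ * (t ^ (-K) - 1) with hA
  -- spatial fderiv
  have hF : ∀ y : Fin n → ℝ, HasFDerivAt (fun z => G z t)
      ((G y t * (-(b/t))) • (∑ j, (2 * y j) • (ContinuousLinearMap.proj j : (Fin n → ℝ) →L[ℝ] ℝ))) y := by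
    intro y
    have hsum : HasFDerivAt (fun z : Fin n → ℝ => ∑ j, z j ^ 2)
        (∑ j, (2 * y j) • (ContinuousLinearMap.proj j : (Fin n → ℝ) →L[ℝ] ℝ)) y := by
      have h : ∀ j ∈ Finset.univ, HasFDerivAt (fun z : Fin n → ℝ => z j ^ 2)
          ((2 * y j) • (ContinuousLinearMap.proj j : (Fin n → ℝ) →L[ℝ] ℝ)) y := by
        intro j _
        have := (hasDerivAt_pow 2 (y j)).comp_hasFDerivAt y
          ((ContinuousLinearMap.proj j : (Fin n → ℝ) →L[ℝ] ℝ).hasFDerivAt (x := y))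
        simpa [Function.comp_def] using this
      simpa using HasFDerivAt.fun_sum h
    have hφ : HasDerivAt (fun u : ℝ => Real.exp (A - (b * (1 + u) + K) / t))
        (Real.exp (A - (b * (1 + ∑ j, y j ^ 2) + K) / t) * (-(b/t))) (∑ j, y j ^ 2) := by
      have h1 : HasDerivAt (fun u : ℝ => A - (b * (1 + u) + K) / t) (-(b/t)) (∑ j, y j ^ 2) := by
        have h2 : HasDerivAt (fun u : ℝ => (b * (1 + u) + K) / t) (b / t) (∑ j, y j ^ 2) := by
          have := ((((hasDerivAt_id (∑ j, y j ^ 2)).const_add 1).const_mul b).add_const K).div_const t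
          simpa using this
        simpa using h2.const_sub A
      simpa using h1.exp
    have hc := hφ.comp_hasFDerivAt y hsum
    have heq : (fun z : Fin n → ℝ => G z t)
        = (fun u : ℝ => Real.exp (A - (b * (1 + u) + K) / t)) ∘ (fun z : Fin n → ℝ => ∑ j, z j ^ 2) := by
      funext z; simp [hG, Function.comp, hA]
    rw [heq, hG]
    exact hc
  have hFval : ∀ (i : Fin n) (y : Fin n → ℝ),
      fderiv ℝ (fun z => G z t) y (Pi.single i 1) = G y t * (-(b/t)) * (2 * y i) := by
    intro i y
    rw [(hF y).fderiv]
    simp [ContinuousLinearMap.sum_apply, Pi.single_apply, mul_ite, Finset.sum_ite_eq']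
  have houter : ∀ i : Fin n,
      fderiv ℝ (fun y => fderiv ℝ (fun z => G z t) y (Pi.single i 1)) x (Pi.single i 1)
        = G x t * (4 * b^2 * (x i)^2 / t^2 - 2*b/t) := by
    intro i
    have heq : (fun y => fderiv ℝ (fun z => G z t) y (Pi.single i 1))
        = fun y => G y t * (-(2*b/t) * y i) := by
      funext y; rw [hFval i y]; ring
    rw [heq]
    have hg : HasFDerivAt (fun y : Fin n → ℝ => -(2*b/t) * y i)
        ((-(2*b/t)) • (ContinuousLinearMap.proj i : (Fin n → ℝ) →L[ℝ] ℝ)) x :=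
      ((ContinuousLinearMap.proj i : (Fin n → ℝ) →L[ℝ] ℝ).hasFDerivAt (x := x)).const_mul _
    have h1 := (hF x).fun_mul hg
    rw [h1.fderiv]
    simp only [ContinuousLinearMap.add_apply, ContinuousLinearMap.smul_apply,
      ContinuousLinearMap.sum_apply, ContinuousLinearMap.proj_apply, Pi.single_apply,
      smul_eq_mul, mul_ite, mul_one, mul_zero, Finset.sum_ite_eq', Finset.mem_univ, if_true]
    field_simp
    ring
  simp only [houter]
  have hsum2 : ∑ i : Fin n, G x t * (4 * b^2 * (x i)^2 / t^2 - 2*b/t)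
      = G x t * (4*b^2*(∑ i, (x i)^2)/t^2 - 2*b*n/t) := by
    rw [← Finset.mul_sum, Finset.sum_sub_distrib, Finset.sum_const, Finset.card_univ,
      Fintype.card_fin, ← Finset.sum_div, ← Finset.mul_sum]
    congr 1
    push_cast
    ring
  rw [hsum2]
  -- time derivative
  set C : ℝ := b * (1 + ∑ i, (x i)^2) + K with hC
  have hGt : HasDerivAt (fun s => G x s) (G x t * (2*γ*(-K * t ^ (-K - 1)) + C / t^2)) t := by
    have h1 : HasDerivAt (fun s : ℝ => s ^ (-K)) (-K * t ^ (-K - 1)) t := by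
      simpa using (Real.hasDerivAt_rpow_const (p := -K) (Or.inl ht'))
    have h3 : HasDerivAt (fun s : ℝ => C / s) (-C / t^2) t := by
      simpa [div_eq_mul_inv, neg_div] using (hasDerivAt_inv ht').const_mul C
    have h2 : HasDerivAt (fun s : ℝ => 2*γ*(s ^ (-K) - 1) - C / s)
        (2*γ*(-K * t ^ (-K - 1)) + C / t^2) t := by
      have := ((h1.sub_const 1).const_mul (2*γ)).fun_sub h3
      exact this.congr_deriv (by ring)
    have h4 := h2.exp
    have heq : (fun s => G x s) = fun s : ℝ => Real.exp (2*γ*(s ^ (-K) - 1) - C / s) := by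
      funext s; rw [hG]
    rw [heq, hG]
    convert h4 using 1
  rw [hGt.deriv]
  rw [← mul_sub, mul_div_cancel_left₀ _ (ne_of_gt (hGpos x))]
  have hr : t ^ (-K - 1) = (t ^ (K+1))⁻¹ := by
    rw [show (-K - 1 : ℝ) = -(K+1) by ring, Real.rpow_neg ht.le]
  rw [hr]
  have htK : (t : ℝ) ^ (K+1) ≠ 0 := ne_of_gt (Real.rpow_pos_of_pos ht _)
  field_simp
  ring
end
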